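/- arXiv:1504.00440 — 2 statements merged into one kernel-verified Lean document; each statement's English description precedes it below -/
import Mathlib

section
/- Heine-type identity: for the moments μ_k(t) = h_k(t), the n-th monic orthogonal polynomial with respect to the bilinear functional given by the shifted Hankel moment matrix satisfies p_{n,ℓ}(z) · Δ_{n,ℓ}(t) = (−1)^n Δ_{n,ℓ+1}(t − [z]), where [z] = (z, z^2/2, z^3/3, ...). -/
open scoped BigOperators

/-- Complete homogeneous functions `h_k(t)` defined via the generating series
`∑ h_k(t) z^k = exp(∑_{j≥1} t_j z^j)`, encoded through the equivalent recursion
`(k+1) h_{k+1} = ∑_{j=1}^{k+1} j t_j h_{k+1-j}` obtained by differentiating the series. -/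
noncomputable def hh (t : ℕ → ℂ) : ℕ → ℂ
  | 0 => 1
  | (k+1) => ((k : ℂ) + 1)⁻¹ * ∑ i ∈ Finset.range (k+1), ((i : ℂ) + 1) * t (i+1) * hh t (k - i)
decreasing_by exact Nat.lt_succ_of_le (Nat.sub_le k i)

/-- `h_k(t)` extended to integer indices, with `h_k = 0` for `k < 0`. -/
noncomputable def hZ (t : ℕ → ℂ) (m : ℤ) : ℂ := if m < 0 then 0 else hh t m.toNat

/-- Schur polynomial via the Jacobi-Trudi determinant
`s_λ(t) = det[h_{λ_j - j + k}(t)]_{j,k=1}^{ℓ}`. -/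
noncomputable def schur (ℓ : ℕ) (lam : Fin ℓ → ℕ) (t : ℕ → ℂ) : ℂ :=
  Matrix.det (Matrix.of fun j k : Fin ℓ => hZ t ((lam j : ℤ) - ((j : ℕ) + 1) + ((k : ℕ) + 1)))

/-- The `n × n` Hankel determinant `Δ_{n,ℓ}(t) = det[μ_{ℓ+j+k-2}(t)]_{j,k=1}^{n}` of the
moments `μ_k = h_k`, with `Δ_{0,ℓ} = 1`. -/
noncomputable def Del (n ℓ : ℕ) (t : ℕ → ℂ) : ℂ :=
  Matrix.det (Matrix.of fun j k : Fin n => hh t (ℓ + (j : ℕ) + (k : ℕ)))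

/-- The Miwa shift `t - [z]`, replacing `t_j` by `t_j - z^j / j`. -/
noncomputable def miwa (t : ℕ → ℂ) (z : ℂ) : ℕ → ℂ := fun j => t j - z ^ j / (j : ℂ)

/-- The monic orthogonal polynomial `p_{n,ℓ}(z)` given by the determinantal (Heine) formula:
`p_{n,ℓ}(z) = Δ_{n,ℓ}(t)⁻¹ · det` of the `(n+1) × (n+1)` matrix whose first `n` rows are
`(μ_{ℓ+j+k})_{k=0..n}`, `j = 0..n-1`, and whose last row is `(1, z, ..., z^n)`. -/
noncomputable def pOP (n ℓ : ℕ) (t : ℕ → ℂ) (z : ℂ) : ℂ :=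
  (Del n ℓ t)⁻¹ *
    Matrix.det (Matrix.of fun j k : Fin (n+1) =>
      if (j : ℕ) < n then hh t (ℓ + (j : ℕ) + (k : ℕ)) else z ^ (k : ℕ))

lemma hh_zero (t : ℕ → ℂ) : hh t 0 = 1 := by rw [hh]

lemma hh_succ_eq (t : ℕ → ℂ) (k : ℕ) :
    ((k:ℂ)+1) * hh t (k+1) = ∑ i ∈ Finset.range (k+1), ((i:ℂ)+1) * t (i+1) * hh t (k-i) := by
  rw [hh, ← mul_assoc, mul_inv_cancel₀ (Nat.cast_add_one_ne_zero k), one_mul]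

lemma hh_mul (t : ℕ → ℂ) (k : ℕ) :
    (k:ℂ) * hh t k = ∑ i ∈ Finset.range k, ((i:ℂ)+1) * t (i+1) * hh t (k-1-i) := by
  cases k with
  | zero => simp
  | succ m =>
    have := hh_succ_eq t m
    push_cast
    simpa using this

/-- The key generating-function fact in recursive form:
`h_k(t - [z]) = h_k(t) - z h_{k-1}(t)`. -/
lemma hh_miwa (t : ℕ → ℂ) (z : ℂ) (k : ℕ) :
    hh (miwa t z) (k+1) = hh t (k+1) - z * hh t k := by
  induction k using Nat.strong_induction_on with
  | _ k IH =>
  have hne : ((k:ℂ)+1) ≠ 0 := Nat.cast_add_one_ne_zero k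
  apply mul_left_cancel₀ hne
  rw [hh_succ_eq]
  have step : ∀ i ∈ Finset.range (k+1),
      ((i:ℂ)+1) * miwa t z (i+1) * hh (miwa t z) (k-i)
      = (((i:ℂ)+1) * t (i+1) - z^(i+1)) *
        (hh t (k-i) - z * (if i < k then hh t (k-1-i) else 0)) := by
    intro i hi
    have hi' : i ≤ k := Nat.lt_succ_iff.mp (Finset.mem_range.mp hi)
    have hcoeff : ((i:ℂ)+1) * miwa t z (i+1) = ((i:ℂ)+1) * t (i+1) - z^(i+1) := by
      have h1 : ((i:ℂ)+1) ≠ 0 := Nat.cast_add_one_ne_zero i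
      simp only [miwa]
      push_cast
      field_simp
    rw [hcoeff]
    congr 1
    by_cases h : i < k
    · have hik : k - i = (k - 1 - i) + 1 := by omega
      rw [hik, IH (k-1-i) (by omega)]
      simp [h]
    · have : i = k := by omega
      subst this
      simp [hh_zero]
  rw [Finset.sum_congr rfl step]
  have expand : ∀ i ∈ Finset.range (k+1),
      (((i:ℂ)+1) * t (i+1) - z^(i+1)) *
        (hh t (k-i) - z * (if i < k then hh t (k-1-i) else 0))
      = ((i:ℂ)+1) * t (i+1) * hh t (k-i)
        - z * (if i < k then ((i:ℂ)+1) * t (i+1) * hh t (k-1-i) else 0)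
        - z^(i+1) * hh t (k-i)
        + z * (if i < k then z^(i+1) * hh t (k-1-i) else 0) := by
    intro i _
    by_cases h : i < k <;> simp [h] <;> ring
  rw [Finset.sum_congr rfl expand]
  simp only [Finset.sum_add_distrib, Finset.sum_sub_distrib]
  rw [← hh_succ_eq]
  have hS2 : ∑ i ∈ Finset.range (k+1),
      (z * (if i < k then ((i:ℂ)+1) * t (i+1) * hh t (k-1-i) else 0))
      = z * ((k:ℂ) * hh t k) := by
    rw [Finset.sum_range_succ]
    simp only [lt_self_iff_false, if_false, mul_zero, add_zero]
    rw [← Finset.mul_sum, hh_mul]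
    congr 1
    exact Finset.sum_congr rfl fun i hi => by simp [Finset.mem_range.mp hi]
  have hS4 : ∑ i ∈ Finset.range (k+1),
      (z * (if i < k then z^(i+1) * hh t (k-1-i) else 0))
      = ∑ i ∈ Finset.range k, z^(i+2) * hh t (k-1-i) := by
    rw [Finset.sum_range_succ]
    simp only [lt_self_iff_false, if_false, mul_zero, add_zero]
    exact Finset.sum_congr rfl fun i hi => by
      simp only [Finset.mem_range.mp hi, if_true]; ring
  have hS3 : ∑ i ∈ Finset.range (k+1), z^(i+1) * hh t (k-i)
      = (∑ i ∈ Finset.range k, z^(i+2) * hh t (k-1-i)) + z * hh t k := by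
    rw [Finset.sum_range_succ']
    simp only [Nat.sub_zero, zero_add, pow_one]
    congr 1
    exact Finset.sum_congr rfl fun i _ => by
      have : k - (i+1) = k - 1 - i := by omega
      rw [this]
  rw [hS2, hS4, hS3]
  ring

/-- Column reduction and cofactor expansion of the Heine determinant. -/
lemma det_part (n ℓ : ℕ) (t : ℕ → ℂ) (z : ℂ) :
    Matrix.det (Matrix.of fun j k : Fin (n+1) =>
      if (j : ℕ) < n then hh t (ℓ + (j : ℕ) + (k : ℕ)) else z ^ (k : ℕ))
    = (-1)^n * Del n (ℓ+1) (miwa t z) := by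
  set M : Matrix (Fin (n+1)) (Fin (n+1)) ℂ := Matrix.of fun j k =>
    if (j:ℕ) < n then
      (if (k:ℕ) = 0 then hh t (ℓ + (j:ℕ)) else hh (miwa t z) (ℓ + (j:ℕ) + (k:ℕ)))
    else (if (k:ℕ) = 0 then 1 else 0) with hM
  have hdet : Matrix.det (Matrix.of fun j k : Fin (n+1) =>
      if (j : ℕ) < n then hh t (ℓ + (j : ℕ) + (k : ℕ)) else z ^ (k : ℕ)) = Matrix.det M := by
    apply Matrix.det_eq_of_forall_col_eq_smul_add_pred (fun _ => z)
    · intro i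
      by_cases h : (i:ℕ) < n <;> simp [hM, h]
    · intro i j
      by_cases h : (i:ℕ) < n
      · have h1 : ((j.succ : Fin (n+1)) : ℕ) = (j:ℕ) + 1 := rfl
        have h2 : ((j.castSucc : Fin (n+1)) : ℕ) = (j:ℕ) := rfl
        simp only [hM, Matrix.of_apply, h, if_true, h1, h2]
        have hne : (j:ℕ) + 1 ≠ 0 := Nat.succ_ne_zero _
        rw [if_neg hne]
        have : ℓ + (i:ℕ) + ((j:ℕ)+1) = (ℓ + (i:ℕ) + (j:ℕ)) + 1 := by ring
        rw [this, hh_miwa]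
        ring
      · simp only [hM, Matrix.of_apply, h, if_false]
        have h1 : ((j.succ : Fin (n+1)) : ℕ) = (j:ℕ) + 1 := rfl
        have h2 : ((j.castSucc : Fin (n+1)) : ℕ) = (j:ℕ) := rfl
        rw [h1, h2, if_neg (Nat.succ_ne_zero _)]
        rw [pow_succ]
        ring
  rw [hdet, Matrix.det_succ_row M (Fin.last n)]
  rw [Finset.sum_eq_single (0 : Fin (n+1))]
  · have hlast : ((Fin.last n : Fin (n+1)) : ℕ) = n := rfl
    have hM0 : M (Fin.last n) 0 = 1 := by simp [hM]
    rw [hM0, hlast]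
    simp only [Fin.val_zero, add_zero, mul_one]
    congr 1
    unfold Del
    congr 1
    ext j k
    simp only [Matrix.submatrix_apply, Fin.succAbove_last, Fin.zero_succAbove, hM,
      Matrix.of_apply, Fin.coe_castSucc, Fin.val_succ, Matrix.of_apply]
    rw [if_pos j.isLt, if_neg (Nat.succ_ne_zero _)]
    congr 1
    omega
  · intro b _ hb
    have : M (Fin.last n) b = 0 := by
      have : (b:ℕ) ≠ 0 := fun h => hb (Fin.ext h)
      simp [hM, this, hb]
    rw [this]; ring
  · intro h
    exact absurd (Finset.mem_univ _) h

/-- Heine-type identity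
`p_{n,ℓ}(z) · Δ_{n,ℓ}(t) = (-1)^n Δ_{n,ℓ+1}(t - [z])`. -/
theorem stmt_11 (n ℓ : ℕ) (t : ℕ → ℂ) (z : ℂ) (hΔ : Del n ℓ t ≠ 0) :
    pOP n ℓ t z * Del n ℓ t = (-1) ^ n * Del n (ℓ+1) (miwa t z) := by
  rw [pOP, mul_comm (Del n ℓ t)⁻¹, mul_assoc, inv_mul_cancel₀ hΔ, mul_one, det_part]
end

section
/- Let P(z; a) = z^{2N} − (1/(2a)) T_{N−1,−1/2}(z²/a²), where T_{m,α} is the degree-m Maclaurin polynomial of (1+ζ)^α. Then P(± i a; a) = 0 if and only if a^{2N+1} = (−1)^N N 2^{−2N} binomial(2N, N). -/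
open scoped BigOperators

/-- Generalized binomial coefficient `binom(α, k) = α(α-1)⋯(α-k+1)/k!`. -/
noncomputable def genBinom (α : ℂ) (k : ℕ) : ℂ :=
  (∏ i ∈ Finset.range k, (α - (i : ℂ))) / (Nat.factorial k : ℂ)

/-- `T_{m,α}(ζ) = ∑_{k=0}^m binom(α,k) ζ^k`, the degree-`m` Maclaurin polynomial
of `(1+ζ)^α`. -/
noncomputable def TPoly (m : ℕ) (α : ℂ) (ζ : ℂ) : ℂ :=
  ∑ k ∈ Finset.range (m+1), genBinom α k * ζ ^ k

/-- `P(z; a) = z^{2N} - (1/(2a)) T_{N-1,-1/2}(z²/a²)`. -/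
noncomputable def PP (N : ℕ) (a z : ℂ) : ℂ :=
  z ^ (2*N) - 1 / (2*a) * TPoly (N-1) (-1/2) (z^2 / a^2)

lemma central_cast (k : ℕ) :
    ((k:ℂ)+1) * (Nat.choose (2*(k+1)) (k+1) : ℂ) =
      2 * (2*(k:ℂ)+1) * (Nat.choose (2*k) k : ℂ) := by
  have h := Nat.succ_mul_centralBinom_succ k
  have h2 : (((k+1) * Nat.centralBinom (k+1) : ℕ) : ℂ)
      = ((2 * (2*k+1) * Nat.centralBinom k : ℕ) : ℂ) := by exact_mod_cast h
  simp only [Nat.centralBinom] at h2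
  push_cast at h2
  linear_combination h2

lemma genB : ∀ k : ℕ, genBinom (-1/2) k = (-1/4)^k * (Nat.choose (2*k) k : ℂ) := by
  intro k
  induction k with
  | zero => simp [genBinom]
  | succ k ih =>
    have hk1 : ((k:ℂ)+1) ≠ 0 := by
      have h0 : ((k+1 : ℕ):ℂ) ≠ 0 := Nat.cast_ne_zero.mpr (Nat.succ_ne_zero k)
      push_cast at h0; exact h0
    have hf : ((Nat.factorial k : ℕ) : ℂ) ≠ 0 :=
      Nat.cast_ne_zero.mpr (Nat.factorial_ne_zero k)
    have hfac : ((Nat.factorial (k+1) : ℕ) : ℂ) = ((k:ℂ)+1) * (Nat.factorial k : ℂ) := by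
      push_cast [Nat.factorial_succ]; ring
    have hstep : genBinom (-1/2) (k+1) = genBinom (-1/2) k * ((-1/2) - k) / ((k:ℂ)+1) := by
      simp only [genBinom, Finset.prod_range_succ, hfac]
      rw [div_mul_eq_mul_div, div_div, mul_comm ((k:ℂ)+1)]
    rw [hstep, ih, div_eq_iff hk1]
    have hc := central_cast k
    push_cast at hc ⊢
    linear_combination (-1 : ℂ) * (-1/4)^(k+1) * hc

lemma sumL : ∀ N : ℕ, 1 ≤ N →
    ∑ k ∈ Finset.range N, genBinom (-1/2) k * (-1:ℂ)^k =
      2 * N * (Nat.choose (2*N) N : ℂ) / 4^N := by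
  intro N
  induction N with
  | zero => intro h; omega
  | succ n ih =>
    intro _
    rcases Nat.eq_zero_or_pos n with rfl | hn
    · norm_num [genBinom]
    · rw [Finset.sum_range_succ, ih hn, genB]
      have h4 : ((4:ℂ))^n ≠ 0 := pow_ne_zero _ (by norm_num)
      have h4' : ((4:ℂ))^(n+1) ≠ 0 := pow_ne_zero _ (by norm_num)
      have ht : (-1/4:ℂ)^n * (Nat.choose (2*n) n : ℂ) * (-1:ℂ)^n
          = (Nat.choose (2*n) n : ℂ) / 4^n := by
        rw [mul_right_comm, ← mul_pow]
        norm_num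
        rw [one_div, inv_pow, inv_mul_eq_div]
      rw [ht, ← add_div, div_eq_div_iff h4 h4']
      have hc := central_cast n
      push_cast at hc ⊢
      linear_combination (-2:ℂ) * 4^n * hc

/-- `P(± i a; a) = 0` iff `a^{2N+1} = (-1)^N N 2^{-2N} C(2N,N)`. -/
theorem stmt_13 (N : ℕ) (hN : 1 ≤ N) (a : ℂ) (ha : a ≠ 0) :
    (PP N a (Complex.I * a) = 0 ↔
        a ^ (2*N+1) = (-1) ^ N * (N : ℂ) / 2 ^ (2*N) * (Nat.choose (2*N) N : ℂ)) ∧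
      (PP N a (-(Complex.I * a)) = 0 ↔
        a ^ (2*N+1) = (-1) ^ N * (N : ℂ) / 2 ^ (2*N) * (Nat.choose (2*N) N : ℂ)) := by
  have hsq : (Complex.I * a)^2 = -a^2 := by
    rw [mul_pow, Complex.I_sq]; ring
  have hz2 : (Complex.I * a)^2 / a^2 = -1 := by
    rw [hsq, neg_div, div_self (pow_ne_zero 2 ha)]
  have hz2' : (-(Complex.I * a))^2 / a^2 = -1 := by rw [neg_sq]; exact hz2
  have hpow : (Complex.I * a)^(2*N) = (-1)^N * a^(2*N) := by
    rw [pow_mul, hsq, neg_pow, ← pow_mul]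
  have hpow' : (-(Complex.I * a))^(2*N) = (-1)^N * a^(2*N) := by
    rw [pow_mul, neg_sq, ← pow_mul]; exact hpow
  have hT : TPoly (N-1) (-1/2) (-1) = 2 * N * (Nat.choose (2*N) N : ℂ) / 4^N := by
    rw [TPoly, Nat.sub_add_cancel hN]
    exact sumL N hN
  have key : ∀ z : ℂ, z^2/a^2 = -1 → z^(2*N) = (-1)^N * a^(2*N) →
      (PP N a z = 0 ↔
        a ^ (2*N+1) = (-1) ^ N * (N : ℂ) / 2 ^ (2*N) * (Nat.choose (2*N) N : ℂ)) := by
    intro z h1 h2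
    have h2N : ((2:ℂ))^(2*N) = 4^N := by rw [pow_mul]; norm_num
    rw [PP, h1, h2, hT, h2N]
    have he2 : ((-1:ℂ))^N * ((-1:ℂ))^N = 1 := by rw [← mul_pow]; norm_num
    set e := ((-1:ℂ))^N with he
    have hne : e ≠ 0 := by
      rw [he]; exact pow_ne_zero _ (by norm_num)
    have h4 : ((4:ℂ))^N ≠ 0 := pow_ne_zero _ (by norm_num)
    set c := (Nat.choose (2*N) N : ℂ) with hcc
    have factored : e*a^(2*N) - 1/(2*a)*(2*N*c/4^N)
        = e/(a*4^N) * (a^(2*N+1)*4^N - e*(N:ℂ)*c) := by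
      field_simp
      ring_nf
      have he2' : ((-1:ℂ))^(N*2) = 1 := by rw [mul_comm, pow_mul]; norm_num
      linear_combination ((N:ℂ)*c) * he2'
    rw [factored, mul_eq_zero, or_iff_right (div_ne_zero hne (mul_ne_zero ha h4)),
      sub_eq_zero, ← eq_div_iff h4, show e*(N:ℂ)/4^N*c = e*(N:ℂ)*c/4^N from by ring]
  exact ⟨key _ hz2 hpow, key _ hz2' hpow'⟩
end
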